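/- Let R be a finite commutative local ring with maximal ideal 𝔪 and residue field of characteristic p, let M be a finite R-module, and let u be a fixed integer. Let ξ₁, …, ξ_l be i.i.d. R-valued random variables of law μ, whose support contains 0 and 1 and is not contained in any proper subring of R. Fix ε > 0 and set k' = l + u (assume k' ≥ 1). Let C₂ be the set of l-tuples (m₁, …, m_l) ∈ M^l that span M as an R-module, such that every Fourier coefficient of the M-valued random variable Σ_i m_i ξ_i is either equal to 1 or has absolute value at most ε/|M|, and such that at least one nontrivial Fourier coefficient equals 1. Then there is a constant C depending only on M and u such that Σ_{(m_i) ∈ C₂} ‖Σ_i m_i ξ_i‖_∞^{k'} ≤ C · ((1+ε)/p)^l. -/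

import Mathlib

/-!
The bound for the sum over the class `C₂`: tuples `(m₁,…,m_l)` spanning `M`
for which every Fourier coefficient of `Σ m_i ξ_i` is either `1` or small,
with at least one nontrivial coefficient equal to `1`:
`Σ_{C₂} ‖Σ m_i ξ_i‖_∞^{k'} ≤ C·((1+ε)/p)^l`.
-/

noncomputable section

-- The law of `Σ_i m_i ξ_i` where `ξ_1, …, ξ_l` are i.i.d. of law `μ`.
open Classical in
noncomputable def tupleLaw {R : Type} [CommRing R] [Fintype R]
    {M : Type} [AddCommGroup M] [Module R M] {l : ℕ}
    (μ : R → ℝ) (m : Fin l → M) (a : M) : ℝ :=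
  ∑ x ∈ Finset.univ.filter (fun x : Fin l → R => ∑ i, x i • m i = a),
    ∏ i, μ (x i)

/-- The Fourier coefficient of a distribution `f` on the finite abelian group
`M` at an additive character `χ`. -/
noncomputable def fCoeff {M : Type} [AddCommGroup M] [Fintype M]
    (f : M → ℝ) (χ : AddChar M ℂ) : ℂ :=
  ∑ a : M, (f a : ℂ) * χ a

/-- Membership in the class `C₂`: the tuple spans `M`, every Fourier
coefficient of `Σ m_i ξ_i` is either `1` or of absolute value `≤ ε/|M|`,
and some nontrivial Fourier coefficient equals `1`. -/
def InC2 {R : Type} [CommRing R] [Fintype R]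
    {M : Type} [AddCommGroup M] [Module R M] [Fintype M] {l : ℕ}
    (μ : R → ℝ) (ε : ℝ) (m : Fin l → M) : Prop :=
  Submodule.span R (Set.range m) = ⊤ ∧
  (∀ χ : AddChar M ℂ, fCoeff (tupleLaw μ m) χ = 1 ∨
      ‖fCoeff (tupleLaw μ m) χ‖ ≤ ε / (Fintype.card M : ℝ)) ∧
  (∃ χ : AddChar M ℂ, χ ≠ 1 ∧ fCoeff (tupleLaw μ m) χ = 1)

namespace C2Aux

set_option linter.unusedSectionVars false

open Finset

/-! ### Generic lemmas about distributions and characters -/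

section Law

variable {R : Type} [CommRing R] [Fintype R]
variable {M : Type} [AddCommGroup M] [Module R M] [Fintype M]

lemma tupleLaw_eq {l : ℕ} (μ : R → ℝ) (m : Fin l → M) (a : M) [DecidableEq M] :
    tupleLaw μ m a
      = ∑ x : Fin l → R, if (∑ i, x i • m i) = a then ∏ i, μ (x i) else 0 := by
  rw [tupleLaw, Finset.sum_filter]
  congr!

lemma tupleLaw_nonneg {l : ℕ} {μ : R → ℝ} (hμ : ∀ r, 0 ≤ μ r) (m : Fin l → M) (a : M) :
    0 ≤ tupleLaw μ m a := by
  classical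
  rw [tupleLaw_eq]
  refine Finset.sum_nonneg fun x _ => ?_
  split
  · exact Finset.prod_nonneg fun i _ => hμ _
  · exact le_rfl

lemma tupleLaw_sum {l : ℕ} {μ : R → ℝ} (hμ1 : ∑ r, μ r = 1) (m : Fin l → M) :
    ∑ a, tupleLaw μ m a = 1 := by
  classical
  simp_rw [tupleLaw_eq]
  rw [Finset.sum_comm]
  have : ∀ x : Fin l → R,
      (∑ a : M, if (∑ i, x i • m i) = a then ∏ i, μ (x i) else 0) = ∏ i, μ (x i) := by
    intro x
    rw [Finset.sum_ite_eq Finset.univ (∑ i, x i • m i) (fun _ => ∏ i, μ (x i))]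
    simp
  simp_rw [this]
  rw [← Fintype.piFinset_univ, ← Finset.prod_univ_sum]
  simp [hμ1]

lemma tupleLaw_single_le {l : ℕ} {μ : R → ℝ} (hμ : ∀ r, 0 ≤ μ r) (m : Fin l → M)
    (x : Fin l → R) : (∏ i, μ (x i)) ≤ tupleLaw μ m (∑ i, x i • m i) := by
  classical
  rw [tupleLaw_eq]
  have := Finset.single_le_sum (f := fun y : Fin l → R =>
      if (∑ i, y i • m i) = (∑ i, x i • m i) then ∏ i, μ (y i) else 0)
    (fun y _ => by
      split
      · exact Finset.prod_nonneg fun i _ => hμ _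
      · exact le_rfl)
    (Finset.mem_univ x)
  simpa using this

end Law

section Chars

variable {M : Type} [AddCommGroup M] [Fintype M]

lemma abs_addChar (χ : AddChar M ℂ) (a : M) : ‖χ a‖ = 1 := by
  exact χ.norm_apply a

lemma char_eq_one_of_re_eq_one {χ : AddChar M ℂ} {a : M} (h : (χ a).re = 1) : χ a = 1 := by
  have h2 : (χ a).re * (χ a).re + (χ a).im * (χ a).im = 1 := by
    have := abs_addChar χ a
    have h3 : Complex.normSq (χ a) = 1 := by
      have := congrArg (· ^ 2) this
      rw [← Complex.sq_norm, this]; norm_num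
    simpa [Complex.normSq_apply] using h3
  have him : (χ a).im = 0 := by nlinarith
  apply Complex.ext <;> simp [h, him]

lemma fCoeff_eq_one_iff {f : M → ℝ} (hf0 : ∀ a, 0 ≤ f a) (hf1 : ∑ a, f a = 1)
    (χ : AddChar M ℂ) :
    fCoeff f χ = 1 ↔ ∀ a, f a ≠ 0 → χ a = 1 := by
  constructor
  · intro hχ a ha
    have hre : ∑ b, f b * (1 - (χ b).re) = 0 := by
      have h1 : (fCoeff f χ).re = 1 := by rw [hχ]; simp
      have h2 : (fCoeff f χ).re = ∑ b, f b * (χ b).re := by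
        rw [fCoeff, Complex.re_sum]
        exact Finset.sum_congr rfl fun b _ => Complex.re_ofReal_mul _ _
      have : ∑ b, f b * (χ b).re = 1 := by rw [← h2, h1]
      simp only [mul_sub, mul_one, Finset.sum_sub_distrib, hf1, this]
      ring
    have hnn : ∀ b ∈ Finset.univ, 0 ≤ f b * (1 - (χ b).re) := by
      intro b _
      apply mul_nonneg (hf0 b)
      have := Complex.re_le_norm (χ b)
      have h4 : ‖χ b‖ = 1 := abs_addChar χ b
      linarith
    have := (Finset.sum_eq_zero_iff_of_nonneg hnn).mp hre a (Finset.mem_univ a)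
    have hre1 : (χ a).re = 1 := by
      rcases mul_eq_zero.mp this with h | h
      · exact absurd h ha
      · linarith
    exact char_eq_one_of_re_eq_one hre1
  · intro h
    have : fCoeff f χ = ∑ a, (f a : ℂ) := by
      refine Finset.sum_congr rfl fun a _ => ?_
      by_cases ha : f a = 0
      · simp [ha]
      · rw [h a ha, mul_one]
    rw [this, ← Complex.ofReal_sum, hf1, Complex.ofReal_one]

/-- The common kernel of the characters with Fourier coefficient 1. -/
def dualKer (f : M → ℝ) : AddSubgroup M where
  carrier := {a | ∀ χ : AddChar M ℂ, fCoeff f χ = 1 → χ a = 1}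
  zero_mem' := fun χ _ => χ.map_zero_eq_one
  add_mem' := by
    intro a b ha hb χ hχ
    rw [AddChar.map_add_eq_mul, ha χ hχ, hb χ hχ, one_mul]
  neg_mem' := by
    intro a ha χ hχ
    rw [AddChar.map_neg_eq_inv, ha χ hχ, inv_one]

lemma mem_dualKer {f : M → ℝ} {a : M} :
    a ∈ dualKer f ↔ ∀ χ : AddChar M ℂ, fCoeff f χ = 1 → χ a = 1 := Iff.rfl

/-- `|Γ| * |H| = |M|` where `Γ` is the set of characters with coefficient 1 and
`H` their common kernel. -/
lemma card_gamma_mul_card_ker {f : M → ℝ} (hf0 : ∀ a, 0 ≤ f a) (hf1 : ∑ a, f a = 1) :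
    ((Finset.univ.filter fun χ : AddChar M ℂ => fCoeff f χ = 1).card : ℕ)
      * Nat.card (dualKer f) = Fintype.card M := by
  classical
  set Γ : Finset (AddChar M ℂ) := Finset.univ.filter fun χ => fCoeff f χ = 1 with hΓ
  have hmemΓ : ∀ χ : AddChar M ℂ, χ ∈ Γ ↔ fCoeff f χ = 1 := by
    intro χ; simp [hΓ]
  have h1Γ : (1 : AddChar M ℂ) ∈ Γ := by
    rw [hmemΓ]
    rw [fCoeff_eq_one_iff hf0 hf1]
    intro a _; simp
  have hmul : ∀ χ₁ ∈ Γ, ∀ χ₂ ∈ Γ, χ₁ * χ₂ ∈ Γ := by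
    intro χ₁ h₁ χ₂ h₂
    rw [hmemΓ] at *
    rw [fCoeff_eq_one_iff hf0 hf1] at *
    intro a ha
    rw [AddChar.mul_apply, h₁ a ha, h₂ a ha, one_mul]
  have hinv : ∀ χ ∈ Γ, χ⁻¹ ∈ Γ := by
    intro χ h
    rw [hmemΓ] at *
    rw [fCoeff_eq_one_iff hf0 hf1] at *
    intro a ha
    rw [AddChar.inv_apply', h a ha, inv_one]
  have hS1 : ∑ χ ∈ Γ, ∑ a : M, χ a = (Fintype.card M : ℂ) := by
    have : ∀ χ ∈ Γ, ∑ a : M, χ a = if χ = (0 : AddChar M ℂ) then (Fintype.card M : ℂ) else 0 :=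
      fun χ _ => AddChar.sum_eq_ite χ
    rw [Finset.sum_congr rfl this, Finset.sum_ite_eq' Γ (0 : AddChar M ℂ)
      (fun _ => (Fintype.card M : ℂ))]
    have h0 : (0 : AddChar M ℂ) ∈ Γ := h1Γ
    rw [if_pos h0]
  have hS2 : ∑ χ ∈ Γ, ∑ a : M, χ a
      = (Nat.card (dualKer f) : ℂ) * (Γ.card : ℂ) := by
    rw [Finset.sum_comm]
    have hinner : ∀ a : M, (∑ χ ∈ Γ, χ a)
        = if a ∈ dualKer f then (Γ.card : ℂ) else 0 := by
      intro a
      by_cases ha : a ∈ dualKer f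
      · rw [if_pos ha]
        rw [Finset.sum_congr rfl (fun χ hχ => ha χ ((hmemΓ χ).mp hχ))]
        simp
      · rw [if_neg ha]
        rw [mem_dualKer] at ha
        push_neg at ha
        obtain ⟨χ₀, hχ₀Γ, hχ₀a⟩ := ha
        have hχ₀Γ' : χ₀ ∈ Γ := (hmemΓ χ₀).mpr hχ₀Γ
        have key : χ₀ a * ∑ χ ∈ Γ, χ a = ∑ χ ∈ Γ, χ a := by
          rw [Finset.mul_sum]
          refine Finset.sum_nbij' (fun χ => χ₀ * χ) (fun χ => χ₀⁻¹ * χ) ?_ ?_ ?_ ?_ ?_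
          · intro χ hχ; exact hmul _ hχ₀Γ' _ hχ
          · intro χ hχ; exact hmul _ (hinv _ hχ₀Γ') _ hχ
          · intro χ _; rw [← mul_assoc, inv_mul_cancel, one_mul]
          · intro χ _; rw [← mul_assoc, mul_inv_cancel, one_mul]
          · intro χ _; rw [AddChar.mul_apply]
        have : (χ₀ a - 1) * ∑ χ ∈ Γ, χ a = 0 := by
          rw [sub_mul, one_mul, key, sub_self]
        rcases mul_eq_zero.mp this with h | h
        · exact absurd (sub_eq_zero.mp h) hχ₀a
        · exact h
    rw [Finset.sum_congr rfl fun a _ => hinner a]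
    rw [← Finset.sum_filter, Finset.sum_const, nsmul_eq_mul]
    congr 1
    rw [Nat.card_eq_fintype_card]
    norm_cast
    exact (Fintype.card_subtype fun a => a ∈ dualKer f).symm
  have hfin : (Nat.card (dualKer f) : ℂ) * (Γ.card : ℂ) = (Fintype.card M : ℂ) := by
    rw [← hS2, hS1]
  rw [mul_comm] at hfin
  exact_mod_cast hfin

lemma inversion (f : M → ℝ) (a : M) :
    (f a : ℂ) * (Fintype.card M : ℂ) = ∑ χ : AddChar M ℂ, fCoeff f χ * χ (-a) := by
  classical
  have h1 : ∀ χ : AddChar M ℂ, fCoeff f χ * χ (-a) = ∑ b : M, (f b : ℂ) * χ (b - a) := by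
    intro χ
    rw [fCoeff, Finset.sum_mul]
    refine Finset.sum_congr rfl fun b _ => ?_
    rw [mul_assoc, ← AddChar.map_add_eq_mul, sub_eq_add_neg]
  simp_rw [h1]
  rw [Finset.sum_comm]
  have h2 : ∀ b : M, ∑ χ : AddChar M ℂ, (f b : ℂ) * χ (b - a)
      = (f b : ℂ) * (if b - a = 0 then (Fintype.card M : ℂ) else 0) := by
    intro b
    rw [← Finset.mul_sum, AddChar.sum_apply_eq_ite]
  simp_rw [h2, sub_eq_zero, mul_ite, mul_zero]
  rw [Finset.sum_ite_eq' Finset.univ a (fun b => (f b : ℂ) * (Fintype.card M : ℂ))]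
  simp

/-- The key Fourier-analytic bound: if all Fourier coefficients are either `1`
or at most `ε/|M|`, then `f` is bounded by `(1+ε)/|H|` where `H` is the common
kernel of the coefficient-1 characters. -/
lemma apply_le_of_small {f : M → ℝ} (hf0 : ∀ a, 0 ≤ f a) (hf1 : ∑ a : M, f a = 1)
    {ε : ℝ} (hε : 0 ≤ ε)
    (hsmall : ∀ χ : AddChar M ℂ, fCoeff f χ = 1 ∨
      ‖fCoeff f χ‖ ≤ ε / (Fintype.card M : ℝ)) (a : M) :
    f a ≤ (1 + ε) / (Nat.card (dualKer f) : ℝ) := by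
  classical
  set cM := Fintype.card M with hcM
  set cH := Nat.card (dualKer f) with hcH
  set Γ : Finset (AddChar M ℂ) := Finset.univ.filter fun χ => fCoeff f χ = 1 with hΓ
  have hΓH : (Γ.card : ℕ) * cH = cM := card_gamma_mul_card_ker hf0 hf1
  have hcM0 : 0 < cM := Fintype.card_pos
  have hcH0 : 0 < cH := Nat.card_pos
  have hΓ1 : 1 ≤ Γ.card := by
    have : (1 : AddChar M ℂ) ∈ Γ := by
      simp only [hΓ, Finset.mem_filter, Finset.mem_univ, true_and]
      rw [fCoeff]
      simp only [AddChar.one_apply, mul_one]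
      rw [← Complex.ofReal_sum, hf1, Complex.ofReal_one]
    exact Finset.card_pos.mpr ⟨_, this⟩
  have hHM : cH ≤ cM := by
    calc cH ≤ Γ.card * cH := Nat.le_mul_of_pos_left _ (by omega)
    _ = cM := hΓH
  have key : f a * cM ≤ (Γ.card : ℝ) + ε := by
    have e1 : f a * (cM : ℝ) = ‖(f a : ℂ) * (cM : ℂ)‖ := by
      rw [norm_mul, Complex.norm_real, Real.norm_eq_abs, Complex.norm_natCast, abs_of_nonneg (hf0 a)]
    rw [e1, inversion f a]
    calc ‖∑ χ : AddChar M ℂ, fCoeff f χ * χ (-a)‖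
        ≤ ∑ χ : AddChar M ℂ, ‖fCoeff f χ * χ (-a)‖ := by
          exact
            norm_sum_le Finset.univ (fun χ : AddChar M ℂ => fCoeff f χ * χ (-a))
      _ = ∑ χ : AddChar M ℂ, ‖fCoeff f χ‖ := by
          refine Finset.sum_congr rfl fun χ _ => ?_
          rw [norm_mul, abs_addChar, mul_one]
      _ ≤ ∑ χ : AddChar M ℂ, (if fCoeff f χ = 1 then 1 else ε / cM) := by
          refine Finset.sum_le_sum fun χ _ => ?_
          split_ifs with h
          · rw [h]; simp
          · exact (hsmall χ).resolve_left h
      _ = Γ.card * 1 + (Finset.univ.filter fun χ : AddChar M ℂ =>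
            ¬ fCoeff f χ = 1).card * (ε / cM) := by
          rw [Finset.sum_ite, Finset.sum_const, Finset.sum_const, nsmul_eq_mul, nsmul_eq_mul]
      _ ≤ (Γ.card : ℝ) + ε := by
          have hle : ((Finset.univ.filter fun χ : AddChar M ℂ =>
              ¬ fCoeff f χ = 1).card : ℝ) ≤ (cM : ℝ) := by
            have h1 : (Finset.univ.filter fun χ : AddChar M ℂ =>
                ¬ fCoeff f χ = 1).card ≤ Fintype.card (AddChar M ℂ) :=
              le_trans (Finset.card_filter_le _ _) (le_of_eq (Finset.card_univ))
            have h2 : Fintype.card (AddChar M ℂ) = cM := AddChar.card_eq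
            exact_mod_cast h1.trans_eq h2
          have : ((Finset.univ.filter fun χ : AddChar M ℂ =>
              ¬ fCoeff f χ = 1).card : ℝ) * (ε / cM) ≤ ε := by
            calc _ ≤ (cM : ℝ) * (ε / cM) :=
                  mul_le_mul_of_nonneg_right hle (by positivity)
            _ = ε := by field_simp
          linarith
  have h2 : f a ≤ ((Γ.card : ℝ) + ε) / cM := by
    rw [le_div_iff₀ (by exact_mod_cast hcM0)]
    exact key
  refine h2.trans ?_
  rw [div_le_div_iff₀ (by exact_mod_cast hcM0) (by exact_mod_cast hcH0)]
  have hΓH' : (Γ.card : ℝ) * cH = cM := by exact_mod_cast hΓH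
  have hHM' : (cH : ℝ) ≤ cM := by exact_mod_cast hHM
  nlinarith [hε, hcH0]

end Chars

/-! ### Ring- and group-theoretic lemmas -/

lemma nilpotent_mem_max {R : Type} [CommRing R] [Finite R] [IsLocalRing R] {x : R}
    (hx : x ∈ IsLocalRing.maximalIdeal R) : ∃ n, x ^ n = 0 := by
  obtain ⟨a, b, hne, h⟩ := Finite.exists_ne_map_eq_of_infinite (fun n : ℕ => x ^ n)
  wlog hab : a < b generalizing a b
  · exact this b a hne.symm h.symm ((hne.lt_or_gt).resolve_left hab)
  refine ⟨a, ?_⟩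
  have h2 : x ^ a * (1 - x ^ (b - a)) = 0 := by
    rw [mul_sub, mul_one, ← pow_add, Nat.add_sub_cancel' hab.le, ← h, sub_self]
  have hmem : x ^ (b - a) ∈ IsLocalRing.maximalIdeal R :=
    Ideal.pow_mem_of_mem _ hx _ (by omega)
  have hu : IsUnit (1 - x ^ (b - a)) :=
    IsLocalRing.isUnit_one_sub_self_of_mem_nonunits _ hmem
  exact (hu.mul_left_eq_zero).mp h2

lemma card_pgroup {p n : ℕ} (hp : p.Prime) {M : Type} [AddCommGroup M] [Fintype M]
    (h : ∀ a : M, (p ^ n : ℕ) • a = 0) : ∃ t, Fintype.card M = p ^ t := by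
  haveI : Fact p.Prime := ⟨hp⟩
  have hpg : IsPGroup p (Multiplicative M) := by
    intro g
    refine ⟨n, ?_⟩
    have hh := h g.toAdd
    have : (g ^ p ^ n).toAdd = (1 : Multiplicative M).toAdd := by
      rw [toAdd_pow, hh]; rfl
    exact Multiplicative.toAdd.injective this
  obtain ⟨t, ht⟩ := (IsPGroup.iff_card (p := p) (G := Multiplicative M)).mp hpg
  refine ⟨t, ?_⟩
  rw [Nat.card_eq_fintype_card, Fintype.card_multiplicative] at ht
  exact ht

lemma card_lt_of_lt {M : Type} [AddCommGroup M] [Fintype M] {A H : AddSubgroup M}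
    (h : A < H) : Nat.card A < Nat.card H := by
  have hsub : (A : Set M) ⊂ (H : Set M) := by
    rw [Set.ssubset_iff_of_subset (by exact_mod_cast h.le)]
    obtain ⟨x, hxH, hxA⟩ := SetLike.exists_of_lt h
    exact ⟨x, hxH, hxA⟩
  have := Set.ncard_lt_ncard hsub (Set.toFinite _)
  rwa [← Nat.card_coe_set_eq, ← Nat.card_coe_set_eq] at this

lemma mul_card_le {p t : ℕ} (hp : p.Prime) {M : Type} [AddCommGroup M] [Fintype M]
    (ht : Fintype.card M = p ^ t) {A H : AddSubgroup M} (h : A < H) :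
    p * Nat.card A ≤ Nat.card H := by
  have hAd : Nat.card A ∣ p ^ t := by
    rw [← ht, ← Nat.card_eq_fintype_card]; exact AddSubgroup.card_addSubgroup_dvd_card A
  have hHd : Nat.card H ∣ p ^ t := by
    rw [← ht, ← Nat.card_eq_fintype_card]; exact AddSubgroup.card_addSubgroup_dvd_card H
  obtain ⟨i, hi, hAi⟩ := (Nat.dvd_prime_pow hp).mp hAd
  obtain ⟨j, hj, hHj⟩ := (Nat.dvd_prime_pow hp).mp hHd
  have hlt := card_lt_of_lt h
  rw [hAi, hHj] at hlt ⊢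
  have hij : i < j := by
    by_contra hij
    exact absurd (pow_le_pow_right₀ hp.one_lt.le (by omega)) (not_le.mpr hlt)
  calc p * p ^ i = p ^ (i + 1) := by ring
    _ ≤ p ^ j := pow_le_pow_right₀ hp.one_lt.le (by omega)

/-! ### The arithmetic lemma -/

lemma arith {p cA cH cM : ℕ} (l k' : ℕ) {u : ℤ} (hk : (k' : ℤ) = (l : ℤ) + u)
    {ε : ℝ} (hε : 0 < ε) (hp : 0 < p) (hA : 0 < cA) (hpA : p * cA ≤ cH) (hHM : cH ≤ cM) :
    (cA : ℝ) ^ l * (min 1 ((1 + ε) / (cH : ℝ))) ^ k'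
      ≤ (cM : ℝ) ^ u.natAbs * ((1 + ε) / (p : ℝ)) ^ l := by
  have hcH1 : 1 ≤ cH := le_trans (by nlinarith) hpA
  have hH0 : (0 : ℝ) < cH := by exact_mod_cast Nat.lt_of_lt_of_le Nat.zero_lt_one hcH1
  have hM1 : (1 : ℝ) ≤ cM := by exact_mod_cast le_trans hcH1 hHM
  have hp0 : (0 : ℝ) < p := by exact_mod_cast hp
  have h1ε : (0 : ℝ) < 1 + ε := by linarith
  have hB0 : (0 : ℝ) ≤ min 1 ((1 + ε) / cH) := le_min (by norm_num) (by positivity)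
  have hpA' : (p : ℝ) * cA ≤ cH := by exact_mod_cast hpA
  have hA0 : (0 : ℝ) < cA := by exact_mod_cast hA
  by_cases hcase : (1 + ε) ≤ (cH : ℝ)
  · set x : ℝ := (1 + ε) / cH with hx
    have hx0 : 0 < x := by positivity
    have hx1 : x ≤ 1 := by rw [hx, div_le_one hH0]; exact hcase
    have h1 : (min 1 ((1 + ε) / cH)) ^ k' ≤ x ^ k' :=
      pow_le_pow_left₀ hB0 (min_le_right _ _) k'
    have hxsplit : x ^ k' = x ^ l * x ^ u := by
      have e1 : x ^ (k' : ℤ) = x ^ ((l : ℤ) + u) := by rw [hk]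
      rw [zpow_add₀ (ne_of_gt hx0)] at e1
      rw [← zpow_natCast x k', e1, zpow_natCast]
    have hxu : x ^ u ≤ (cM : ℝ) ^ u.natAbs := by
      rcases le_or_gt 0 u with hu | hu
      · obtain ⟨v, rfl⟩ := Int.eq_ofNat_of_zero_le hu
        rw [zpow_natCast]
        calc x ^ v ≤ 1 := pow_le_one₀ hx0.le hx1
          _ ≤ (cM : ℝ) ^ (Int.ofNat v).natAbs := one_le_pow₀ hM1
      · have hu' : u = -(u.natAbs : ℤ) := by omega
        rw [hu', zpow_neg, zpow_natCast, ← inv_pow]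
        have hxinv : x⁻¹ ≤ (cM : ℝ) := by
          rw [hx, inv_div]
          calc (cH : ℝ) / (1 + ε) ≤ cH := by
                apply div_le_self hH0.le; linarith
            _ ≤ cM := by exact_mod_cast hHM
        have h5 : (x⁻¹) ^ u.natAbs ≤ (cM : ℝ) ^ u.natAbs :=
          pow_le_pow_left₀ (by positivity) hxinv _
        rw [hu'] at h5 ⊢
        simpa using h5
    calc (cA : ℝ) ^ l * (min 1 ((1 + ε) / cH)) ^ k'
        ≤ (cA : ℝ) ^ l * (x ^ l * x ^ u) := by
          rw [← hxsplit]
          exact mul_le_mul_of_nonneg_left h1 (by positivity)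
      _ = ((cA : ℝ) * x) ^ l * x ^ u := by rw [mul_pow, mul_assoc]
      _ ≤ ((1 + ε) / p) ^ l * (cM : ℝ) ^ u.natAbs := by
          refine mul_le_mul (pow_le_pow_left₀ (by positivity) ?_ l) hxu
            (zpow_nonneg hx0.le u) (by positivity)
          rw [hx]
          have e2 : (cA : ℝ) * ((1 + ε) / cH) = ((cA : ℝ) * (1 + ε)) / cH := by ring
          rw [e2, div_le_div_iff₀ hH0 hp0]
          nlinarith
      _ = (cM : ℝ) ^ u.natAbs * ((1 + ε) / p) ^ l := mul_comm _ _
  · push_neg at hcase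
    calc (cA : ℝ) ^ l * (min 1 ((1 + ε) / cH)) ^ k'
        ≤ (cA : ℝ) ^ l * 1 := by
          refine mul_le_mul_of_nonneg_left ?_ (by positivity)
          exact pow_le_one₀ hB0 (min_le_left _ _)
      _ ≤ ((1 + ε) / p) ^ l := by
          rw [mul_one]
          refine pow_le_pow_left₀ hA0.le ?_ l
          rw [le_div_iff₀ hp0]
          nlinarith
      _ ≤ (cM : ℝ) ^ u.natAbs * ((1 + ε) / p) ^ l := by
          refine le_mul_of_one_le_left (by positivity) (one_le_pow₀ hM1)

/-! ### Auxiliary subgroups -/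

section Subgroups

variable {R : Type} [CommRing R] [Fintype R]
variable {M : Type} [AddCommGroup M] [Module R M] [Fintype M]

/-- The subgroup of elements `a` with `x • a ∈ H` for all `x` in the support of `μ`. -/
def ASub (μ : R → ℝ) (H : AddSubgroup M) : AddSubgroup M where
  carrier := {a | ∀ x : R, μ x ≠ 0 → x • a ∈ H}
  zero_mem' := fun x _ => by rw [smul_zero]; exact H.zero_mem
  add_mem' := by
    intro a b ha hb x hx
    rw [smul_add]; exact H.add_mem (ha x hx) (hb x hx)
  neg_mem' := by
    intro a ha x hx
    rw [smul_neg]; exact H.neg_mem (ha x hx)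

lemma mem_ASub {μ : R → ℝ} {H : AddSubgroup M} {a : M} :
    a ∈ ASub μ H ↔ ∀ x : R, μ x ≠ 0 → x • a ∈ H := Iff.rfl

/-- The subring of scalars stabilizing a subgroup `H`. -/
def stabRing (H : AddSubgroup M) : Subring R where
  carrier := {r | ∀ a ∈ H, r • a ∈ H}
  one_mem' := fun a ha => by rwa [one_smul]
  mul_mem' := by
    intro r s hr hs a ha
    rw [mul_smul]; exact hr _ (hs _ ha)
  zero_mem' := fun a _ => by rw [zero_smul]; exact H.zero_mem
  add_mem' := by
    intro r s hr hs a ha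
    rw [add_smul]; exact H.add_mem (hr a ha) (hs a ha)
  neg_mem' := by
    intro r hr a ha
    rw [neg_smul]; exact H.neg_mem (hr a ha)

end Subgroups

end C2Aux

/-- **The `C₂` bound.** The constant `C` depends only on `M` and `u`
(and on `R`). -/
theorem c2_sum_bound
    (R : Type) [CommRing R] [Fintype R] [IsLocalRing R]
    (p : ℕ) (hp : CharP (IsLocalRing.ResidueField R) p)
    (M : Type) [AddCommGroup M] [Module R M] [Fintype M]
    (u : ℤ) :
    ∃ C : ℝ, ∀ ε : ℝ, 0 < ε →
      ∀ μ : R → ℝ, (∀ r, 0 ≤ μ r) → (∑ r, μ r = 1) →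
        μ 0 ≠ 0 → μ 1 ≠ 0 →
        (∀ S : Subring R, S ≠ ⊤ → ¬ (∀ x : R, μ x ≠ 0 → x ∈ S)) →
        ∀ l k' : ℕ, 1 ≤ k' → (k' : ℤ) = (l : ℤ) + u →
          (open Classical in
          ∑ m ∈ Finset.univ.filter (fun m : Fin l → M => InC2 μ ε m),
            (⨆ a : M, tupleLaw μ m a) ^ k')
          ≤ C * ((1 + ε) / (p : ℝ)) ^ l := by
  classical
  haveI : Finite (IsLocalRing.ResidueField R) :=
    Finite.of_surjective _ Ideal.Quotient.mk_surjective
  haveI : Fintype (IsLocalRing.ResidueField R) := Fintype.ofFinite _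
  haveI := hp
  have pPrime : p.Prime := CharP.char_is_prime (IsLocalRing.ResidueField R) p
  have hpmem : (p : R) ∈ IsLocalRing.maximalIdeal R := by
    rw [← IsLocalRing.residue_eq_zero_iff, map_natCast]
    exact CharP.cast_eq_zero _ p
  obtain ⟨n, hn⟩ := C2Aux.nilpotent_mem_max hpmem
  have hsmul : ∀ a : M, (p ^ n : ℕ) • a = 0 := by
    intro a
    rw [← Nat.cast_smul_eq_nsmul R]
    have : ((p ^ n : ℕ) : R) = ((p : R)) ^ n := by push_cast; ring
    rw [this, hn, zero_smul]
  obtain ⟨t, ht⟩ := C2Aux.card_pgroup pPrime hsmul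
  haveI : Fintype (AddSubgroup M) := Fintype.ofFinite _
  refine ⟨(Fintype.card (AddSubgroup M) : ℝ) * (Fintype.card M : ℝ) ^ u.natAbs, ?_⟩
  intro ε hε μ hμ0 hμ1 hμz hμo hgen l k' hk1 hku
  have hf0 : ∀ m : Fin l → M, ∀ a, 0 ≤ tupleLaw μ m a :=
    fun m a => C2Aux.tupleLaw_nonneg hμ0 m a
  have hf1 : ∀ m : Fin l → M, ∑ a, tupleLaw μ m a = 1 :=
    fun m => C2Aux.tupleLaw_sum hμ1 m
  set C2s : Finset (Fin l → M) := Finset.univ.filter (fun m : Fin l → M => InC2 μ ε m)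
    with hC2s
  set Hof : (Fin l → M) → AddSubgroup M := fun m => C2Aux.dualKer (tupleLaw μ m) with hHof
  -- members of `C2s` have their coordinates in `ASub μ (Hof m)`
  have hmemA : ∀ m ∈ C2s, ∀ i, m i ∈ C2Aux.ASub μ (Hof m) := by
    intro m hm i
    rw [C2Aux.mem_ASub]
    intro x hx
    -- `x • m i` is in the support of the law
    have hepos : tupleLaw μ m (x • m i) ≠ 0 := by
      set e : Fin l → R := fun j => if j = i then x else 0 with he
      have hesum : ∑ j, e j • m j = x • m i := by
        rw [Finset.sum_eq_single i]
        · simp [he]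
        · intro j _ hj
          simp [he, hj]
        · intro hi
          exact absurd (Finset.mem_univ i) hi
      have hprod : 0 < ∏ j, μ (e j) := by
        refine Finset.prod_pos fun j _ => ?_
        by_cases hji : j = i
        · simp only [he, hji, if_pos rfl]
          exact (hμ0 x).lt_of_ne (Ne.symm hx)
        · simp only [he, if_neg hji]
          exact (hμ0 0).lt_of_ne (Ne.symm hμz)
      have hle := C2Aux.tupleLaw_single_le hμ0 m e
      rw [hesum] at hle
      exact ne_of_gt (lt_of_lt_of_le hprod hle)
    intro χ hχ
    exact (C2Aux.fCoeff_eq_one_iff (hf0 m) (hf1 m) χ).mp hχ _ hepos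
  -- the sup bound for members of `C2s`
  have hsupb : ∀ m ∈ C2s, (⨆ a : M, tupleLaw μ m a)
      ≤ min 1 ((1 + ε) / (Nat.card (Hof m) : ℝ)) := by
    intro m hm
    have hmC2 : InC2 μ ε m := by
      rw [hC2s, Finset.mem_filter] at hm
      exact hm.2
    refine ciSup_le fun a => le_min ?_ ?_
    · calc tupleLaw μ m a ≤ ∑ b, tupleLaw μ m b :=
          Finset.single_le_sum (fun b _ => hf0 m b) (Finset.mem_univ a)
        _ = 1 := hf1 m
    · exact C2Aux.apply_le_of_small (hf0 m) (hf1 m) hε.le hmC2.2.1 a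
  have hsup0 : ∀ m : Fin l → M, 0 ≤ ⨆ a : M, tupleLaw μ m a := by
    intro m
    refine le_ciSup_of_le (Set.Finite.bddAbove (Set.finite_range _)) 0 (hf0 m 0)
  -- fiber decomposition over the kernel subgroup
  rw [← Finset.sum_fiberwise_of_maps_to (g := Hof) (t := (Finset.univ : Finset (AddSubgroup M)))
    (fun m _ => Finset.mem_univ _) (fun m => (⨆ a : M, tupleLaw μ m a) ^ k')]
  have hmain : ∀ H : AddSubgroup M,
      (∑ m ∈ C2s.filter (fun m => Hof m = H), (⨆ a : M, tupleLaw μ m a) ^ k')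
        ≤ (Fintype.card M : ℝ) ^ u.natAbs * ((1 + ε) / (p : ℝ)) ^ l := by
    intro H
    rcases Finset.eq_empty_or_nonempty (C2s.filter (fun m => Hof m = H)) with hemp | hne
    · rw [hemp, Finset.sum_empty]
      have : (0:ℝ) < (p:ℝ) := by exact_mod_cast pPrime.pos
      positivity
    · obtain ⟨m₀, hm₀⟩ := hne
      rw [Finset.mem_filter] at hm₀
      obtain ⟨hm₀C2, hm₀H⟩ := hm₀
      have hm₀InC2 : InC2 μ ε m₀ := by
        rw [hC2s, Finset.mem_filter] at hm₀C2
        exact hm₀C2.2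
      obtain ⟨hspan, hsmall, χ₀, hχ₀ne, hχ₀1⟩ := hm₀InC2
      -- H is a proper subgroup
      have hHne : H ≠ ⊤ := by
        obtain ⟨x, hx⟩ := AddChar.ne_one_iff.mp hχ₀ne
        intro hH
        have hxH : x ∈ Hof m₀ := by rw [hm₀H, hH]; exact AddSubgroup.mem_top x
        exact hx (hxH χ₀ hχ₀1)
      -- the subgroup A
      set A : AddSubgroup M := C2Aux.ASub μ H with hA
      have hAle : A ≤ H := by
        intro a ha
        have := ha 1 hμo
        rwa [one_smul] at this
      have hAne : A ≠ H := by
        intro hEq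
        have hstab : ∀ x : R, μ x ≠ 0 → x ∈ (C2Aux.stabRing H : Subring R) := by
          intro x hx a haH
          have haA : a ∈ A := by rw [hEq]; exact haH
          exact haA x hx
        have hS : (C2Aux.stabRing H : Subring R) = ⊤ := by
          by_contra hneS
          exact hgen _ hneS hstab
        let H' : Submodule R M :=
          { carrier := (H : Set M)
            add_mem' := fun h h' => H.add_mem h h'
            zero_mem' := H.zero_mem
            smul_mem' := by
              intro r a ha
              have hr : r ∈ (C2Aux.stabRing H : Subring R) := by
                rw [hS]; exact Subring.mem_top r
              exact hr a ha }
        have hrange : Set.range m₀ ⊆ (H' : Set M) := by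
          rintro _ ⟨i, rfl⟩
          exact hAle ((hm₀H ▸ hmemA m₀ hm₀C2 i : m₀ i ∈ C2Aux.ASub μ H))
        have hle : Submodule.span R (Set.range m₀) ≤ H' := Submodule.span_le.mpr hrange
        rw [hspan] at hle
        refine hHne ((AddSubgroup.eq_top_iff' H).mpr fun a => ?_)
        exact hle Submodule.mem_top
      have hAH : A < H := lt_of_le_of_ne hAle hAne
      have hcard : p * Nat.card A ≤ Nat.card H := C2Aux.mul_card_le pPrime ht hAH
      -- count the fiber
      have hsub : C2s.filter (fun m => Hof m = H) ⊆
          Fintype.piFinset (fun _ : Fin l => (A : Set M).toFinset) := by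
        intro m hm
        rw [Finset.mem_filter] at hm
        rw [Fintype.mem_piFinset]
        intro i
        rw [Set.mem_toFinset]
        exact (hm.2 ▸ hmemA m hm.1 i : m i ∈ C2Aux.ASub μ H)
      have hcount : (C2s.filter (fun m => Hof m = H)).card ≤ Nat.card A ^ l := by
        calc (C2s.filter (fun m => Hof m = H)).card
            ≤ (Fintype.piFinset (fun _ : Fin l => (A : Set M).toFinset)).card :=
              Finset.card_le_card hsub
          _ = ∏ _i : Fin l, (A : Set M).toFinset.card := Fintype.card_piFinset _
          _ = (A : Set M).toFinset.card ^ l := by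
              rw [Finset.prod_const, Finset.card_univ, Fintype.card_fin]
          _ = Nat.card A ^ l := by
              congr 1
              rw [Set.toFinset_card, Nat.card_eq_fintype_card]
              exact Fintype.card_congr (Equiv.setCongr rfl)
      -- bound each term
      have hterm : ∀ m ∈ C2s.filter (fun m => Hof m = H),
          (⨆ a : M, tupleLaw μ m a) ^ k'
            ≤ (min 1 ((1 + ε) / (Nat.card H : ℝ))) ^ k' := by
        intro m hm
        rw [Finset.mem_filter] at hm
        have := hsupb m hm.1
        rw [hm.2] at this
        exact pow_le_pow_left₀ (hsup0 m) this k'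
      have hBnn : (0:ℝ) ≤ (min 1 ((1 + ε) / (Nat.card H : ℝ))) ^ k' := by
        have : (0:ℝ) ≤ min 1 ((1 + ε) / (Nat.card H : ℝ)) := by
          refine le_min (by norm_num) ?_
          have h1 : (0:ℝ) < 1 + ε := by linarith
          positivity
        positivity
      calc (∑ m ∈ C2s.filter (fun m => Hof m = H), (⨆ a : M, tupleLaw μ m a) ^ k')
          ≤ (C2s.filter (fun m => Hof m = H)).card
              • (min 1 ((1 + ε) / (Nat.card H : ℝ))) ^ k' :=
            Finset.sum_le_card_nsmul _ _ _ hterm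
        _ ≤ (Nat.card A ^ l) • (min 1 ((1 + ε) / (Nat.card H : ℝ))) ^ k' :=
            nsmul_le_nsmul_left hBnn hcount
        _ = (Nat.card A : ℝ) ^ l * (min 1 ((1 + ε) / (Nat.card H : ℝ))) ^ k' := by
            rw [nsmul_eq_mul]
            push_cast
            ring
        _ ≤ (Fintype.card M : ℝ) ^ u.natAbs * ((1 + ε) / (p : ℝ)) ^ l := by
            refine C2Aux.arith l k' hku hε pPrime.pos Nat.card_pos hcard ?_
            have : Nat.card H ∣ Fintype.card M := by
              rw [← Nat.card_eq_fintype_card]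
              exact AddSubgroup.card_addSubgroup_dvd_card H
            exact Nat.le_of_dvd Fintype.card_pos this
  calc (∑ H : AddSubgroup M, ∑ m ∈ C2s.filter (fun m => Hof m = H),
        (⨆ a : M, tupleLaw μ m a) ^ k')
      ≤ ∑ _H : AddSubgroup M,
          (Fintype.card M : ℝ) ^ u.natAbs * ((1 + ε) / (p : ℝ)) ^ l :=
        Finset.sum_le_sum fun H _ => hmain H
    _ = (Fintype.card (AddSubgroup M) : ℝ) * (Fintype.card M : ℝ) ^ u.natAbs
        * ((1 + ε) / (p : ℝ)) ^ l := by
        rw [Finset.sum_const, Finset.card_univ, nsmul_eq_mul]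
        ring

end
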